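/- Let ρ ∈ (0,1) and δ ∈ (0,1) with δ ≠ ρ², and set ν_max := min(1/ρ, ρ/δ). Then the function η(ν) := (ρ − νδ)·(1 − νρ) / ( ν · (1 − ρ² − δ·(1 − 2νρ + ν²)) ) is well defined (the denominator is nonzero), continuous, and strictly decreasing on [ρ, ν_max], with η(ρ) = 1 and η(ν_max) = 0; in particular η is a bijection from [ρ, ν_max] onto [0,1]. -/

import Mathlib

private lemma eta_key (r d x y : ℝ) (hr0 : 0 < r) (hd0 : 0 < d)
    (hx : r ≤ x) (hxy : x < y) (hyr : y * r ≤ 1) (hyd : y * d ≤ r) (hyw : y ^ 2 * d < 1) :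
    (r - y * d) * (1 - y * r) * ((x - r) * (1 - x ^ 2 * d))
      < (r - x * d) * (1 - x * r) * ((y - r) * (1 - y ^ 2 * d)) := by
  have hdx : x * d < r := lt_of_lt_of_le (by nlinarith) hyd
  have hxr : x * r < 1 := lt_of_lt_of_le (by nlinarith) hyr
  have hnx : 0 < (r - x * d) * (1 - x * r) := mul_pos (by linarith) (by linarith)
  have hu : 0 ≤ r - y * d := by linarith
  have hv : 0 ≤ 1 - y * r := by linarith
  have ha : 0 ≤ x - r := by linarith
  have hb : 0 < y - x := by linarith
  have hy0 : 0 < y := by linarith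
  have hw : 0 < (1 - y * r) + y * (r - y * d) := by nlinarith
  have hpos : 0 < (r - x * d) * (1 - x * r) * ((1 - y * r) + y * (r - y * d))
      + (x - r) * ((r - y * d) * (1 - y * r) * (r - x * d)
        + r * y * (r - y * d) ^ 2 + d * (1 - y * r) ^ 2
        + (y - x) * r * d * (1 - y * r) + (y - x) * r * d * (r - y * d) * y) := by
    have h2 : 0 ≤ (r - y * d) * (1 - y * r) * (r - x * d)
        + r * y * (r - y * d) ^ 2 + d * (1 - y * r) ^ 2
        + (y - x) * r * d * (1 - y * r) + (y - x) * r * d * (r - y * d) * y := by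
      have t1 : 0 ≤ (r - y * d) * (1 - y * r) * (r - x * d) :=
        mul_nonneg (mul_nonneg hu hv) (by linarith)
      have t2 : 0 ≤ r * y * (r - y * d) ^ 2 := by positivity
      have t3 : 0 ≤ d * (1 - y * r) ^ 2 := by positivity
      have t4 : 0 ≤ (y - x) * r * d * (1 - y * r) := by
        apply mul_nonneg _ hv; positivity
      have t5 : 0 ≤ (y - x) * r * d * (r - y * d) * y := by
        apply mul_nonneg (mul_nonneg _ hu) hy0.le; positivity
      linarith
    nlinarith [mul_pos hnx hw, mul_nonneg ha h2]
  nlinarith [mul_pos hb hpos]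

theorem eta_parametrization (ρ δ : ℝ)
    (hρ : ρ ∈ Set.Ioo (0 : ℝ) 1) (hδ : δ ∈ Set.Ioo (0 : ℝ) 1) (h : δ ≠ ρ ^ 2) :
    (∀ ν ∈ Set.Icc ρ (min (1 / ρ) (ρ / δ)),
      ν * (1 - ρ ^ 2 - δ * (1 - 2 * ν * ρ + ν ^ 2)) ≠ 0) ∧
    ContinuousOn (fun ν : ℝ =>
        (ρ - ν * δ) * (1 - ν * ρ) / (ν * (1 - ρ ^ 2 - δ * (1 - 2 * ν * ρ + ν ^ 2))))
      (Set.Icc ρ (min (1 / ρ) (ρ / δ))) ∧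
    StrictAntiOn (fun ν : ℝ =>
        (ρ - ν * δ) * (1 - ν * ρ) / (ν * (1 - ρ ^ 2 - δ * (1 - 2 * ν * ρ + ν ^ 2))))
      (Set.Icc ρ (min (1 / ρ) (ρ / δ))) ∧
    (ρ - ρ * δ) * (1 - ρ * ρ) / (ρ * (1 - ρ ^ 2 - δ * (1 - 2 * ρ * ρ + ρ ^ 2))) = 1 ∧
    (ρ - min (1 / ρ) (ρ / δ) * δ) * (1 - min (1 / ρ) (ρ / δ) * ρ) /
        (min (1 / ρ) (ρ / δ) *
          (1 - ρ ^ 2 - δ * (1 - 2 * min (1 / ρ) (ρ / δ) * ρ + min (1 / ρ) (ρ / δ) ^ 2)))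
      = 0 ∧
    Set.BijOn (fun ν : ℝ =>
        (ρ - ν * δ) * (1 - ν * ρ) / (ν * (1 - ρ ^ 2 - δ * (1 - 2 * ν * ρ + ν ^ 2))))
      (Set.Icc ρ (min (1 / ρ) (ρ / δ))) (Set.Icc 0 1) := by
  obtain ⟨hρ0, hρ1⟩ := hρ
  obtain ⟨hδ0, hδ1⟩ := hδ
  set m := min (1 / ρ) (ρ / δ) with hm
  -- basic facts about m
  have hm1 : m ≤ 1 / ρ := min_le_left _ _
  have hm2 : m ≤ ρ / δ := min_le_right _ _
  have hρm : ρ < m := by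
    apply lt_min
    · rw [lt_div_iff₀ hρ0]; nlinarith
    · rw [lt_div_iff₀ hδ0]; nlinarith
  have hm2δ : m ^ 2 * δ < 1 := by
    rcases le_total (1 / ρ) (ρ / δ) with hc | hc
    · have hδρ : δ < ρ ^ 2 := by
        rcases lt_or_eq_of_le ((div_le_div_iff₀ hρ0 hδ0).1 hc) with h' | h'
        · nlinarith
        · exact absurd (by nlinarith) h
      rw [hm, min_eq_left hc, show (1 / ρ) ^ 2 * δ = δ / ρ ^ 2 by ring]
      rw [div_lt_one (by positivity)]; exact hδρ
    · have hδρ : ρ ^ 2 < δ := by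
        rcases lt_or_eq_of_le ((div_le_div_iff₀ hδ0 hρ0).1 hc) with h' | h'
        · nlinarith
        · exact absurd (by nlinarith) h
      rw [hm, min_eq_right hc, show (ρ / δ) ^ 2 * δ = ρ ^ 2 / δ by field_simp]
      rw [div_lt_one hδ0]; exact hδρ
  -- facts for ν in the interval
  have hmemρ : ∀ ν ∈ Set.Icc ρ m, ν * ρ ≤ 1 := by
    intro ν hν
    have := hν.2.trans hm1
    calc ν * ρ ≤ 1 / ρ * ρ := by nlinarith
      _ = 1 := by field_simp
  have hmemδ : ∀ ν ∈ Set.Icc ρ m, ν * δ ≤ ρ := by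
    intro ν hν
    have := hν.2.trans hm2
    calc ν * δ ≤ ρ / δ * δ := by nlinarith
      _ = ρ := by field_simp
  have hmemw : ∀ ν ∈ Set.Icc ρ m, ν ^ 2 * δ < 1 := by
    intro ν hν
    have h0 : (0:ℝ) ≤ ν := le_trans hρ0.le hν.1
    have : ν ^ 2 ≤ m ^ 2 := pow_le_pow_left₀ h0 hν.2 2
    nlinarith
  -- denominator identity
  have hden : ∀ ν : ℝ, ν * (1 - ρ ^ 2 - δ * (1 - 2 * ν * ρ + ν ^ 2))
      = (ρ - ν * δ) * (1 - ν * ρ) + (ν - ρ) * (1 - ν ^ 2 * δ) := fun ν => by ring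
  -- positivity of the denominator
  have hS : ∀ ν ∈ Set.Icc ρ m, 0 < (ρ - ν * δ) * (1 - ν * ρ) + (ν - ρ) * (1 - ν ^ 2 * δ) := by
    intro ν hν
    have hw := hmemw ν hν
    have h0 : (0:ℝ) < ν := lt_of_lt_of_le hρ0 hν.1
    rcases lt_or_eq_of_le hν.2 with hlt | heq
    · have h1 : ν * δ < ρ := by
        have : m * δ ≤ ρ := by
          calc m * δ ≤ ρ / δ * δ := by nlinarith [hm2]
            _ = ρ := by field_simp
        nlinarith
      have h2 : ν * ρ < 1 := by
        have : m * ρ ≤ 1 := by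
          calc m * ρ ≤ 1 / ρ * ρ := by nlinarith [hm1]
            _ = 1 := by field_simp
        nlinarith
      have hN : 0 < (ρ - ν * δ) * (1 - ν * ρ) := mul_pos (by linarith) (by linarith)
      have hM : 0 ≤ (ν - ρ) * (1 - ν ^ 2 * δ) :=
        mul_nonneg (by linarith [hν.1]) (by linarith)
      linarith
    · have hN : 0 ≤ (ρ - ν * δ) * (1 - ν * ρ) :=
        mul_nonneg (by linarith [hmemδ ν hν]) (by linarith [hmemρ ν hν])
      have hM : 0 < (ν - ρ) * (1 - ν ^ 2 * δ) :=
        mul_pos (by rw [heq]; linarith) (by linarith)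
      linarith
  have hne : ∀ ν ∈ Set.Icc ρ m, ν * (1 - ρ ^ 2 - δ * (1 - 2 * ν * ρ + ν ^ 2)) ≠ 0 := by
    intro ν hν
    rw [hden ν]
    exact (hS ν hν).ne'
  -- continuity
  have hcont : ContinuousOn (fun ν : ℝ =>
      (ρ - ν * δ) * (1 - ν * ρ) / (ν * (1 - ρ ^ 2 - δ * (1 - 2 * ν * ρ + ν ^ 2))))
      (Set.Icc ρ m) := by
    apply ContinuousOn.div
    · fun_prop
    · fun_prop
    · exact hne
  -- strict antitonicity
  have hanti : StrictAntiOn (fun ν : ℝ =>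
      (ρ - ν * δ) * (1 - ν * ρ) / (ν * (1 - ρ ^ 2 - δ * (1 - 2 * ν * ρ + ν ^ 2))))
      (Set.Icc ρ m) := by
    intro x hx y hy hxy
    dsimp only
    rw [hden x, hden y, div_lt_div_iff₀ (hS y hy) (hS x hx)]
    have hyr : y * ρ ≤ 1 := hmemρ y hy
    have hyd : y * δ ≤ ρ := hmemδ y hy
    have hyw : y ^ 2 * δ < 1 := hmemw y hy
    have hk := eta_key ρ δ x y hρ0 hδ0 hx.1 hxy hyr hyd hyw
    nlinarith [hk]
  -- value at ρ
  have h4 : (ρ - ρ * δ) * (1 - ρ * ρ) / (ρ * (1 - ρ ^ 2 - δ * (1 - 2 * ρ * ρ + ρ ^ 2))) = 1 := by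
    rw [show ρ * (1 - ρ ^ 2 - δ * (1 - 2 * ρ * ρ + ρ ^ 2)) = (ρ - ρ * δ) * (1 - ρ * ρ) by ring]
    exact div_self (mul_pos (by nlinarith) (by nlinarith)).ne'
  -- value at m
  have h5 : (ρ - m * δ) * (1 - m * ρ) /
      (m * (1 - ρ ^ 2 - δ * (1 - 2 * m * ρ + m ^ 2))) = 0 := by
    have hnum : (ρ - m * δ) * (1 - m * ρ) = 0 := by
      rcases le_total (1 / ρ) (ρ / δ) with hc | hc
      · rw [hm, min_eq_left hc]
        have h0 : 1 - 1 / ρ * ρ = 0 := by field_simp; ring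
        rw [h0, mul_zero]
      · rw [hm, min_eq_right hc]
        have h0 : ρ - ρ / δ * δ = 0 := by field_simp; ring
        rw [h0, zero_mul]
    rw [hnum, zero_div]
  -- maps into [0,1]
  have hmaps : Set.MapsTo (fun ν : ℝ =>
      (ρ - ν * δ) * (1 - ν * ρ) / (ν * (1 - ρ ^ 2 - δ * (1 - 2 * ν * ρ + ν ^ 2))))
      (Set.Icc ρ m) (Set.Icc 0 1) := by
    intro ν hν
    dsimp only
    rw [hden ν, Set.mem_Icc]
    have hSν := hS ν hν
    have hN : 0 ≤ (ρ - ν * δ) * (1 - ν * ρ) :=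
      mul_nonneg (by linarith [hmemδ ν hν]) (by linarith [hmemρ ν hν])
    have hM : 0 ≤ (ν - ρ) * (1 - ν ^ 2 * δ) :=
      mul_nonneg (by linarith [hν.1]) (by linarith [hmemw ν hν])
    constructor
    · exact div_nonneg hN hSν.le
    · rw [div_le_one hSν]; linarith
  -- surjectivity
  have hsurj : Set.SurjOn (fun ν : ℝ =>
      (ρ - ν * δ) * (1 - ν * ρ) / (ν * (1 - ρ ^ 2 - δ * (1 - 2 * ν * ρ + ν ^ 2))))
      (Set.Icc ρ m) (Set.Icc 0 1) := by
    have hIV := intermediate_value_Icc' hρm.le hcont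
    beta_reduce at hIV
    rw [h5, h4] at hIV
    exact hIV
  exact ⟨hne, hcont, hanti, h4, h5, ⟨hmaps, hanti.injOn, hsurj⟩⟩
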